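/- Let f(x,y) = (x²y, x⁻¹), defined for x ≠ 0. Let x, y ∈ ℂ with x ≠ 0 and xy ≠ 0, and let k ≥ 1 be a natural number. Then f^[k](x,y) = (x,y) if and only if (xy)^k = 1. In particular, if in addition |xy| < 1, then f^[k](x,y) ≠ (x,y); that is, the ℤ-action on the glued Tate curve space generated by the shift is free over points whose product-of-coordinates value lies in the punctured open unit disc. -/

import Mathlib

lemma tate_iter_formula (x y : ℂ) (hx : x ≠ 0) (hxy : x * y ≠ 0) (n : ℕ) :
    (fun p : ℂ × ℂ => (p.1 ^ 2 * p.2, p.1⁻¹))^[n + 1] (x, y) =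
      ((x * y) ^ (n + 1) * x, ((x * y) ^ n * x)⁻¹) := by
  have hq : (x * y) ≠ 0 := hxy
  induction n with
  | zero =>
    refine Prod.ext ?_ ?_
    · show x ^ 2 * y = (x * y) ^ 1 * x; ring
    · show x⁻¹ = ((x * y) ^ 0 * x)⁻¹; simp
  | succ n ih =>
    rw [Function.iterate_succ_apply', ih]
    have h1 : (x * y) ^ (n + 1) * x ≠ 0 := mul_ne_zero (pow_ne_zero _ hq) hx
    have h2 : (x * y) ^ n * x ≠ 0 := mul_ne_zero (pow_ne_zero _ hq) hx
    refine Prod.ext ?_ ?_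
    · show ((x * y) ^ (n + 1) * x) ^ 2 * ((x * y) ^ n * x)⁻¹ = (x * y) ^ (n + 2) * x
      field_simp
      ring
    · rfl

/-- For `f(x,y) = (x²y, x⁻¹)` (defined where `x ≠ 0`), `x ≠ 0`, `xy ≠ 0`
and `k ≥ 1`, one has `f^[k](x,y) = (x,y)` iff `(xy)^k = 1`; in particular if moreover
`|xy| < 1` then `f^[k](x,y) ≠ (x,y)` (freeness of the shift action over the punctured
unit disc). -/
theorem tate_shift_free (x y : ℂ) (hx : x ≠ 0) (hxy : x * y ≠ 0) (k : ℕ) (hk : 1 ≤ k) :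
    ((fun p : ℂ × ℂ => (p.1 ^ 2 * p.2, p.1⁻¹))^[k] (x, y) = (x, y) ↔ (x * y) ^ k = 1) ∧
      (‖x * y‖ < 1 →
        (fun p : ℂ × ℂ => (p.1 ^ 2 * p.2, p.1⁻¹))^[k] (x, y) ≠ (x, y)) := by
  obtain ⟨n, rfl⟩ : ∃ n, k = n + 1 := ⟨k - 1, (Nat.succ_pred_eq_of_pos hk).symm⟩
  rw [tate_iter_formula x y hx hxy n]
  have hy : y ≠ 0 := fun h => hxy (by simp [h])
  constructor
  · constructor
    · intro h
      have h1 : (x * y) ^ (n + 1) * x = x := congrArg Prod.fst h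
      have := mul_right_cancel₀ hx (h1.trans (one_mul x).symm)
      exact this
    · intro h
      have h2 : (x * y) ^ n * x = y⁻¹ := by
        have : (x * y) ^ n * x * y = 1 := by
          have : (x * y) ^ n * (x * y) = 1 := by rw [← pow_succ]; exact h
          linear_combination this
        field_simp at this ⊢
        linear_combination this
      refine Prod.ext ?_ ?_
      · show (x * y) ^ (n + 1) * x = x; rw [h, one_mul]
      · show ((x * y) ^ n * x)⁻¹ = y; rw [h2, inv_inv]
  · intro habs h
    have h1 : (x * y) ^ (n + 1) = 1 := by
      have h1 : (x * y) ^ (n + 1) * x = x := congrArg Prod.fst h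
      exact mul_right_cancel₀ hx (h1.trans (one_mul x).symm)
    have : ‖(x * y) ^ (n + 1)‖ < 1 := by
      rw [norm_pow]
      exact pow_lt_one₀ (by positivity) habs (Nat.succ_ne_zero n)
    rw [h1] at this
    simp at this
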